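/- Let A and B be positive semidefinite real symmetric n×n matrices with the same kernel. If A ≼ B in the Löwner order, then B⁺ ≼ A⁺, where M⁺ denotes the Moore–Penrose pseudoinverse. -/

import Mathlib

open Matrix

/-- `B` is the Moore–Penrose pseudoinverse of `A`. -/
def IsMoorePenrose {n : ℕ} (A B : Matrix (Fin n) (Fin n) ℝ) : Prop :=
  A * B * A = A ∧ B * A * B = B ∧ (A * B)ᵀ = A * B ∧ (B * A)ᵀ = B * A

/-- Löwner order: `A ≼ B`. -/
def Loewner {n : ℕ} (A B : Matrix (Fin n) (Fin n) ℝ) : Prop := (B - A).PosSemidef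

lemma mp_unique {n : ℕ} {A B C : Matrix (Fin n) (Fin n) ℝ}
    (hB : IsMoorePenrose A B) (hC : IsMoorePenrose A C) : B = C := by
  obtain ⟨hB1, hB2, hB3, hB4⟩ := hB
  obtain ⟨hC1, hC2, hC3, hC4⟩ := hC
  have hab : A * B = A * C := by
    calc A * B = (A * C * A) * B := by rw [hC1]
    _ = (A * C) * (A * B) := by noncomm_ring
    _ = (A * C)ᵀ * (A * B)ᵀ := by rw [hC3, hB3]
    _ = Cᵀ * (A * B * A)ᵀ := by simp [transpose_mul, mul_assoc]
    _ = Cᵀ * Aᵀ := by rw [hB1]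
    _ = (A * C)ᵀ := (transpose_mul _ _).symm
    _ = A * C := hC3
  have hba : B * A = C * A := by
    calc B * A = B * (A * C * A) := by rw [hC1]
    _ = (B * A) * (C * A) := by noncomm_ring
    _ = (B * A)ᵀ * (C * A)ᵀ := by rw [hB4, hC4]
    _ = (A * B * A)ᵀ * Cᵀ := by simp [transpose_mul, mul_assoc]
    _ = Aᵀ * Cᵀ := by rw [hB1]
    _ = (C * A)ᵀ := (transpose_mul _ _).symm
    _ = C * A := hC4
  calc B = B * A * B := hB2.symm
  _ = B * (A * C) := by rw [mul_assoc, hab]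
  _ = (B * A) * C := by rw [mul_assoc]
  _ = (C * A) * C := by rw [hba]
  _ = C := hC2

lemma mp_transpose {n : ℕ} {A B : Matrix (Fin n) (Fin n) ℝ}
    (h : IsMoorePenrose A B) : IsMoorePenrose Aᵀ Bᵀ := by
  obtain ⟨h1, h2, h3, h4⟩ := h
  refine ⟨?_, ?_, ?_, ?_⟩
  · calc Aᵀ * Bᵀ * Aᵀ = (A * B * A)ᵀ := by simp [transpose_mul, mul_assoc]
    _ = Aᵀ := by rw [h1]
  · calc Bᵀ * Aᵀ * Bᵀ = (B * A * B)ᵀ := by simp [transpose_mul, mul_assoc]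
    _ = Bᵀ := by rw [h2]
  · calc (Aᵀ * Bᵀ)ᵀ = B * A := by simp [transpose_mul]
    _ = (B * A)ᵀ := h4.symm
    _ = Aᵀ * Bᵀ := by rw [transpose_mul]
  · calc (Bᵀ * Aᵀ)ᵀ = A * B := by simp [transpose_mul]
    _ = (A * B)ᵀ := h3.symm
    _ = Bᵀ * Aᵀ := by rw [transpose_mul]

lemma mp_symm {n : ℕ} {A Ap : Matrix (Fin n) (Fin n) ℝ} (hAt : Aᵀ = A)
    (h : IsMoorePenrose A Ap) : Apᵀ = Ap := by
  have := mp_transpose h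
  rw [hAt] at this
  exact mp_unique this h

/-- dot product against a symmetric matrix can be moved to the other side. -/
lemma dot_sym {n : ℕ} {A : Matrix (Fin n) (Fin n) ℝ} (hAt : Aᵀ = A)
    (v w : Fin n → ℝ) : v ⬝ᵥ A *ᵥ w = (A *ᵥ v) ⬝ᵥ w := by
  rw [dotProduct_mulVec, ← mulVec_transpose, hAt]

/-- If `A`, `B` are PSD real symmetric matrices with the same kernel and `A ≼ B`, then
`B⁺ ≼ A⁺`. -/
theorem stmt_3 {n : ℕ} (A B Ap Bp : Matrix (Fin n) (Fin n) ℝ)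
    (hA : A.PosSemidef) (hB : B.PosSemidef)
    (hker : ∀ x : Fin n → ℝ, A.mulVec x = 0 ↔ B.mulVec x = 0)
    (hAB : Loewner A B)
    (hAp : IsMoorePenrose A Ap) (hBp : IsMoorePenrose B Bp) :
    Loewner Bp Ap := by
  have hAt : Aᵀ = A := by
    have := hA.1
    rwa [Matrix.IsHermitian, conjTranspose_eq_transpose_of_trivial] at this
  have hBt : Bᵀ = B := by
    have := hB.1
    rwa [Matrix.IsHermitian, conjTranspose_eq_transpose_of_trivial] at this
  have hApt : Apᵀ = Ap := mp_symm hAt hAp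
  have hBpt : Bpᵀ = Bp := mp_symm hBt hBp
  obtain ⟨hA1, hA2, hA3, hA4⟩ := hAp
  obtain ⟨hB1, hB2, hB3, hB4⟩ := hBp
  have hcommA : A * Ap = Ap * A := by
    rw [← hA3, transpose_mul, hApt, hAt]
  have hcommB : B * Bp = Bp * B := by
    rw [← hB3, transpose_mul, hBpt, hBt]
  have hAAAp : A * A * Ap = A := by rw [mul_assoc, hcommA, ← mul_assoc, hA1]
  have hApApA : Ap * Ap * A = Ap := by rw [mul_assoc, ← hcommA, ← mul_assoc, hA2]
  have hBpBpB : Bp * Bp * B = Bp := by rw [mul_assoc, ← hcommB, ← mul_assoc, hB2]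
  -- range B ⊆ range A, in the form A * Ap * B = B (vector level)
  have key : ∀ v : Fin n → ℝ, A *ᵥ (Ap *ᵥ (B *ᵥ v)) = B *ᵥ v := by
    intro v
    obtain ⟨u, hu⟩ : ∃ u, u = B *ᵥ v := ⟨_, rfl⟩
    obtain ⟨w, hw⟩ : ∃ w, w = u - A *ᵥ (Ap *ᵥ u) := ⟨_, rfl⟩
    have hAw : A *ᵥ w = 0 := by
      rw [hw, mulVec_sub, mulVec_mulVec, mulVec_mulVec, hAAAp, sub_self]
    have hBw : B *ᵥ w = 0 := by
      have h := (hker w).1 hAw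
      exact h
    have hww : w ⬝ᵥ w = 0 := by
      have h1 : w ⬝ᵥ u = 0 := by
        rw [hu, dot_sym hBt, hBw, zero_dotProduct]
      have h2 : w ⬝ᵥ (A *ᵥ (Ap *ᵥ u)) = 0 := by
        rw [dot_sym hAt, hAw, zero_dotProduct]
      calc w ⬝ᵥ w = w ⬝ᵥ (u - A *ᵥ (Ap *ᵥ u)) := by rw [← hw]
      _ = w ⬝ᵥ u - w ⬝ᵥ (A *ᵥ (Ap *ᵥ u)) := dotProduct_sub _ _ _
      _ = 0 := by rw [h1, h2, sub_zero]
    have hw0 : w = 0 := dotProduct_self_eq_zero.mp hww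
    have h0 : u - A *ᵥ (Ap *ᵥ u) = 0 := by rw [← hw, hw0]
    have := (sub_eq_zero.mp h0).symm
    rw [hu] at this
    exact this
  -- Main positivity
  refine posSemidef_iff_dotProduct_mulVec.mpr ⟨?_, ?_⟩
  · rw [Matrix.IsHermitian, conjTranspose_eq_transpose_of_trivial, transpose_sub, hApt, hBpt]
  · intro x
    obtain ⟨x', hx'⟩ : ∃ x', x' = B *ᵥ (Bp *ᵥ x) := ⟨_, rfl⟩
    obtain ⟨w, hwdef⟩ : ∃ w, w = x - x' := ⟨_, rfl⟩
    have hBw : B *ᵥ w = 0 := by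
      have hmat : B * B * Bp = B := by
        rw [mul_assoc, hcommB, ← mul_assoc, hB1]
      rw [hwdef, hx', mulVec_sub, mulVec_mulVec, mulVec_mulVec, hmat, sub_self]
    have hAw : A *ᵥ w = 0 := (hker w).2 hBw
    have hApw : Ap *ᵥ w = 0 := by
      calc Ap *ᵥ w = (Ap * Ap * A) *ᵥ w := by rw [hApApA]
      _ = Ap *ᵥ (Ap *ᵥ (A *ᵥ w)) := by rw [mulVec_mulVec, mulVec_mulVec]
      _ = 0 := by rw [hAw, mulVec_zero, mulVec_zero]
    have hBpw : Bp *ᵥ w = 0 := by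
      calc Bp *ᵥ w = (Bp * Bp * B) *ᵥ w := by rw [hBpBpB]
      _ = Bp *ᵥ (Bp *ᵥ (B *ᵥ w)) := by rw [mulVec_mulVec, mulVec_mulVec]
      _ = 0 := by rw [hBw, mulVec_zero, mulVec_zero]
    have hxsplit : x = x' + w := by rw [hwdef]; ring
    -- reduce quadratic forms to x'
    have reduce : ∀ (M : Matrix (Fin n) (Fin n) ℝ), Mᵀ = M → M *ᵥ w = 0 →
        x ⬝ᵥ M *ᵥ x = x' ⬝ᵥ M *ᵥ x' := by
      intro M hMt hMw
      rw [hxsplit, mulVec_add, hMw, add_zero, add_dotProduct, dot_sym hMt w, hMw,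
        zero_dotProduct, add_zero]
    have hredA : x ⬝ᵥ Ap *ᵥ x = x' ⬝ᵥ Ap *ᵥ x' := reduce Ap hApt hApw
    have hredB : x ⬝ᵥ Bp *ᵥ x = x' ⬝ᵥ Bp *ᵥ x' := reduce Bp hBpt hBpw
    obtain ⟨z, hz⟩ : ∃ z, z = Ap *ᵥ x' := ⟨_, rfl⟩
    obtain ⟨y, hy⟩ : ∃ y, y = Bp *ᵥ x' := ⟨_, rfl⟩
    have hAz : A *ᵥ z = x' := by rw [hz, hx']; exact key (Bp *ᵥ x)
    have hBy : B *ᵥ y = x' := by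
      have hmat : B * (Bp * B * Bp) = B * Bp := by rw [hB2]
      rw [hy, hx', mulVec_mulVec, mulVec_mulVec, mulVec_mulVec, mul_assoc, mul_assoc,
        ← mul_assoc Bp B Bp, hmat, ← mulVec_mulVec]
    have h1 : x' ⬝ᵥ Ap *ᵥ x' = z ⬝ᵥ A *ᵥ z := by
      rw [← hz, ← hAz]
      exact dotProduct_comm _ _
    have h2 : x' ⬝ᵥ Bp *ᵥ x' = y ⬝ᵥ x' := by
      rw [← hy]; exact dotProduct_comm _ _
    -- positivity pieces
    have p1 : 0 ≤ (z - y) ⬝ᵥ A *ᵥ (z - y) := by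
      have := hA.dotProduct_mulVec_nonneg (z - y)
      simpa using this
    have p2 : 0 ≤ y ⬝ᵥ (B - A) *ᵥ y := by
      have := PosSemidef.dotProduct_mulVec_nonneg hAB y
      simpa using this
    have hAzy : z ⬝ᵥ A *ᵥ y = y ⬝ᵥ x' := by
      rw [dot_sym hAt, hAz]
      exact dotProduct_comm _ _
    have hyAz : y ⬝ᵥ A *ᵥ z = y ⬝ᵥ x' := by rw [hAz]
    have e1 : (z - y) ⬝ᵥ A *ᵥ (z - y) = z ⬝ᵥ A *ᵥ z - 2 * (y ⬝ᵥ x') + y ⬝ᵥ A *ᵥ y := by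
      rw [mulVec_sub, dotProduct_sub, sub_dotProduct, sub_dotProduct, hAzy, hyAz]
      ring
    have e2 : y ⬝ᵥ (B - A) *ᵥ y = y ⬝ᵥ x' - y ⬝ᵥ A *ᵥ y := by
      rw [sub_mulVec, dotProduct_sub, hBy]
    -- combine
    have main : x' ⬝ᵥ Bp *ᵥ x' ≤ x' ⬝ᵥ Ap *ᵥ x' := by
      rw [h1, h2]
      nlinarith [p1, p2, e1, e2]
    have hfin : 0 ≤ x ⬝ᵥ Ap *ᵥ x - x ⬝ᵥ Bp *ᵥ x := by
      rw [hredA, hredB]; linarith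
    simpa [sub_mulVec, dotProduct_sub] using hfin
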